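/- arXiv:1107.2865 — 8 statements merged into one kernel-verified Lean document; each statement's English description precedes it below -/
import Mathlib

section
/- The function f : ℝ → ℝ defined by f(x) = (x/(x−1))·(1 − 4π²/x²)^{3/2} − 1 is strictly increasing on the closed interval [7, 6π² + 2π·√(9π² − 2)]. -/
open Real

theorem f_strictMonoOn :
    StrictMonoOn (fun x : ℝ => (x / (x - 1)) * (1 - 4 * π ^ 2 / x ^ 2) ^ ((3 : ℝ) / 2) - 1)
      (Set.Icc 7 (6 * π ^ 2 + 2 * π * Real.sqrt (9 * π ^ 2 - 2))) := by
  have hπ := Real.pi_gt_d6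
  have hπ' := Real.pi_lt_d2
  apply strictMonoOn_of_deriv_pos (convex_Icc _ _)
  · -- continuity
    apply ContinuousOn.sub _ continuousOn_const
    apply ContinuousOn.mul
    · exact ContinuousOn.div continuousOn_id (by fun_prop)
        (fun x hx => by have := hx.1; intro h; have h' : x - 1 = 0 := h; nlinarith)
    · apply ContinuousOn.rpow_const
      · exact ContinuousOn.sub continuousOn_const
          (ContinuousOn.div continuousOn_const (by fun_prop)
            (fun x hx => by have := hx.1; positivity))
      · intro x hx; right; norm_num
  · intro x hx
    rw [interior_Icc] at hx
    obtain ⟨hx1, hx2⟩ := hx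
    have hx0 : (0:ℝ) < x := by linarith
    have hx1' : x - 1 ≠ 0 := by intro h; nlinarith
    have hw : 0 < 1 - 4*π^2/x^2 := by
      rw [sub_pos, div_lt_one (by positivity)]
      nlinarith
    -- derivative
    have hu : HasDerivAt (fun y : ℝ => y / (y - 1)) ((1*(x-1) - x*1)/(x-1)^2) x :=
      (hasDerivAt_id x).div ((hasDerivAt_id x).sub_const 1) hx1'
    have h1 : HasDerivAt (fun y : ℝ => 4*π^2/y^2) (-(8*π^2/x^3)) x := by
      have h := (hasDerivAt_const x (4*π^2)).div (hasDerivAt_pow 2 x) (by positivity)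
      refine h.congr_deriv ?_
      have hx0' : x ≠ 0 := hx0.ne'
      field_simp
      ring
    have hw2 : HasDerivAt (fun y : ℝ => 1 - 4*π^2/y^2) (8*π^2/x^3) x := by
      have h2 := (hasDerivAt_const x (1:ℝ)).sub h1
      simp only [zero_sub, neg_neg] at h2
      exact h2
    have hv := hw2.rpow_const (p := (3:ℝ)/2) (Or.inl hw.ne')
    have hD : HasDerivAt (fun x : ℝ => (x / (x - 1)) * (1 - 4 * π ^ 2 / x ^ 2) ^ ((3 : ℝ) / 2) - 1)
        (((1*(x-1) - x*1)/(x-1)^2) * (1 - 4*π^2/x^2) ^ ((3:ℝ)/2)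
          + (x/(x-1)) * ((8*π^2/x^3) * ((3:ℝ)/2) * (1 - 4*π^2/x^2) ^ ((3:ℝ)/2 - 1))) x :=
      (hu.mul hv).sub_const 1
    rw [hD.deriv]
    -- positivity of the derivative
    have hsplit : (1 - 4*π^2/x^2) ^ ((3:ℝ)/2)
        = (1 - 4*π^2/x^2) * (1 - 4*π^2/x^2) ^ ((1:ℝ)/2) := by
      rw [show (3:ℝ)/2 = 1 + 1/2 by norm_num, Real.rpow_add hw, Real.rpow_one]
    have hhalf : ((3:ℝ)/2 - 1) = (1:ℝ)/2 := by norm_num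
    rw [hhalf, hsplit]
    have key : x^2 - 12*π^2*x + 8*π^2 < 0 := by
      set s := Real.sqrt (9 * π ^ 2 - 2) with hsdef
      have hs0 : 0 ≤ 2*π*s := by positivity
      have hs : s ^ 2 = 9 * π ^ 2 - 2 := Real.sq_sqrt (by nlinarith)
      have h7 : 6*π^2 - 7 < 2*π*s := by
        by_contra h
        push_neg at h
        have h' : 0 ≤ 6*π^2 - 7 - 2*π*s := by linarith
        nlinarith [hs, mul_nonneg h' (show (0:ℝ) ≤ 6*π^2 - 7 + 2*π*s by nlinarith)]
      nlinarith [hs, mul_pos (show (0:ℝ) < 2*π*s - (x - 6*π^2) by linarith)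
        (show (0:ℝ) < 2*π*s + (x - 6*π^2) by linarith)]
    have heq : ((1*(x-1) - x*1)/(x-1)^2) * ((1 - 4*π^2/x^2) * (1 - 4*π^2/x^2) ^ ((1:ℝ)/2))
          + (x/(x-1)) * ((8*π^2/x^3) * ((3:ℝ)/2) * (1 - 4*π^2/x^2) ^ ((1:ℝ)/2))
        = (1 - 4*π^2/x^2) ^ ((1:ℝ)/2) * ((-(x^2 - 12*π^2*x + 8*π^2)) / (x^2*(x-1)^2)) := by
      field_simp
      ring
    rw [heq]
    exact mul_pos (Real.rpow_pos_of_pos hw _) (div_pos (by linarith) (by positivity))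
end

section
/- The function f : ℝ → ℝ defined by f(x) = (x/(x−1))·(1 − 4π²/x²)^{3/2} − 1 is strictly decreasing on the interval [6π² + 2π·√(9π² − 2), ∞). -/
open Real

theorem f_strictAntiOn :
    StrictAntiOn (fun x : ℝ => (x / (x - 1)) * (1 - 4 * π ^ 2 / x ^ 2) ^ ((3 : ℝ) / 2) - 1)
      (Set.Ici (6 * π ^ 2 + 2 * π * Real.sqrt (9 * π ^ 2 - 2))) := by
  have hπ : (3:ℝ) < π := pi_gt_three
  have hπ0 : (0:ℝ) < π := by linarith
  have hs0 : (0:ℝ) ≤ 9 * π ^ 2 - 2 := by nlinarith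
  have hsq : Real.sqrt (9 * π ^ 2 - 2) ^ 2 = 9 * π ^ 2 - 2 := Real.sq_sqrt hs0
  have hsnn : 0 ≤ Real.sqrt (9 * π ^ 2 - 2) := Real.sqrt_nonneg _
  set c := 6 * π ^ 2 + 2 * π * Real.sqrt (9 * π ^ 2 - 2) with hcdef
  have hc2π : 2 * π < c := by nlinarith
  have hderiv : ∀ x : ℝ, c ≤ x → HasDerivAt
      (fun x : ℝ => (x / (x - 1)) * (1 - 4 * π ^ 2 / x ^ 2) ^ ((3 : ℝ) / 2) - 1)
      ((1 - 4 * π ^ 2 / x ^ 2) ^ ((1:ℝ)/2) *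
        ((12 * π ^ 2 * (x - 1) - (x ^ 2 - 4 * π ^ 2)) / (x ^ 2 * (x - 1) ^ 2))) x := by
    intro x hx
    have hx2π : 2 * π < x := lt_of_lt_of_le hc2π hx
    have hx1 : 1 < x := by nlinarith
    have hx0 : 0 < x := by nlinarith
    have hxne : x ≠ 0 := ne_of_gt hx0
    have hx1ne : x - 1 ≠ 0 := sub_ne_zero.mpr (ne_of_gt hx1)
    have hw : 0 < 1 - 4 * π ^ 2 / x ^ 2 := by
      rw [sub_pos, div_lt_one (by positivity)]
      nlinarith
    have h1 : HasDerivAt (fun y : ℝ => 1 - 4 * π ^ 2 / y ^ 2)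
        (-((0 * x ^ 2 - 4 * π ^ 2 * (↑2 * x ^ (2 - 1))) / (x ^ 2) ^ 2)) x := by
      exact ((hasDerivAt_const x (4 * π ^ 2)).div (hasDerivAt_pow 2 x)
        (by positivity)).const_sub 1
    have h2 := h1.rpow_const (p := (3:ℝ)/2) (Or.inr (by norm_num))
    have h3 : HasDerivAt (fun y : ℝ => y / (y - 1))
        ((1 * (x - 1) - x * 1) / (x - 1) ^ 2) x :=
      (hasDerivAt_id x).div ((hasDerivAt_id x).sub_const 1) hx1ne
    have h4 := (h3.mul h2).sub_const 1
    convert h4 using 1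
    case e'_4 => rfl
    case e'_5 => rfl
    case e'_8 => rfl
    rw [show ((3:ℝ)/2) = 1 + 1/2 by norm_num, Real.rpow_add hw, Real.rpow_one,
      show (1:ℝ) + 1/2 - 1 = 1/2 by norm_num]
    set s := (1 - 4 * π ^ 2 / x ^ 2) ^ ((1:ℝ)/2) with hs
    field_simp
    ring
  apply strictAntiOn_of_deriv_neg (convex_Ici c)
  · exact fun x hx => (hderiv x hx).continuousAt.continuousWithinAt
  · intro x hx
    rw [interior_Ici] at hx
    have hx' : c < x := hx
    have hx2π : 2 * π < x := lt_trans hc2π hx'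
    have hx1 : 1 < x := by nlinarith
    have hx0 : 0 < x := by nlinarith
    have hw : 0 < 1 - 4 * π ^ 2 / x ^ 2 := by
      rw [sub_pos, div_lt_one (by positivity)]
      nlinarith
    rw [(hderiv x hx'.le).deriv]
    apply mul_neg_of_pos_of_neg
    · exact Real.rpow_pos_of_pos hw _
    · apply div_neg_of_neg_of_pos
      · have ha : 0 < x - (6 * π ^ 2 + 2 * π * Real.sqrt (9 * π ^ 2 - 2)) := by
          rw [hcdef] at hx'; linarith
        have hb : 0 < x - 6 * π ^ 2 + 2 * π * Real.sqrt (9 * π ^ 2 - 2) := by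
          have : 0 ≤ 2 * π * Real.sqrt (9 * π ^ 2 - 2) := by positivity
          linarith
        nlinarith [mul_pos ha hb, hsq]
      · have h1 : 0 < x - 1 := by linarith
        positivity
end

section
/- There exists a unique real number x₀ in the interval [7, ∞) satisfying (x₀/(x₀−1))·(1 − 4π²/x₀²)^{3/2} = 1, and this x₀ lies in the open interval (59, 59.1). Moreover, (x/(x−1))·(1 − 4π²/x²)^{3/2} > 1 for every real x > x₀. -/
open Real

noncomputable def Pf (x : ℝ) : ℝ := 2*x^5 - (12*π^2+1)*x^4 + 48*π^4*x^2 - 64*π^6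

lemma pi2l : (9.8696:ℝ) < π^2 := by nlinarith [pi_gt_d6]
lemma pi2u : π^2 < (9.869607:ℝ) := by nlinarith [pi_lt_d6, pi_pos]
lemma pi4l : (97.409:ℝ) < π^4 := by nlinarith [pi2l, sq_nonneg (π^2 - 9.8696)]
lemma pi4u : π^4 < (97.40915:ℝ) := by nlinarith [pi2u, pi2l]
lemma pi6l : (961.3879:ℝ) < π^6 := by nlinarith [pi2l, pi4l, sq_nonneg π, pi_pos]
lemma pi6u : π^6 < (961.3901:ℝ) := by nlinarith [pi2u, pi4u, pi2l, pi4l]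

lemma hPcont : Continuous Pf := by unfold Pf; continuity

lemma hPderiv (x : ℝ) : HasDerivAt Pf (10*x^4 - (48*π^2+4)*x^3 + 96*π^4*x) x := by
  have hfun : Pf = fun y => (2*y^5 - (12*π^2+1)*y^4) + (48*π^4*y^2 - 64*π^6) := by
    funext y; simp only [Pf]; ring
  rw [hfun]
  have h := (((hasDerivAt_pow 5 x).const_mul (2:ℝ)).sub
      ((hasDerivAt_pow 4 x).const_mul (12*π^2+1))).add
      (((hasDerivAt_pow 2 x).const_mul (48*π^4)).sub (hasDerivAt_const x (64*π^6)))
  refine h.congr_deriv ?_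
  push_cast
  ring

lemma P7_47 {x : ℝ} (h7 : 7 ≤ x) (h47 : x ≤ 47) : Pf x < 0 := by
  have hanti : StrictAntiOn Pf (Set.Icc 7 47) := by
    apply strictAntiOn_of_deriv_neg (convex_Icc _ _) hPcont.continuousOn
    intro y hy
    rw [interior_Icc] at hy
    rw [(hPderiv y).deriv]
    obtain ⟨hy1, hy2⟩ := hy
    have hy0 : (0:ℝ) ≤ y := by linarith
    nlinarith [pi2l, pi2u, pi4u,
      mul_nonneg (mul_nonneg (sub_pos.2 hy1).le (sub_pos.2 hy2).le) (sq_nonneg y),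
      mul_nonneg (mul_nonneg (sub_pos.2 hy1).le (sub_pos.2 hy2).le) hy0]
  have hP7 : Pf 7 < 0 := by unfold Pf; nlinarith [pi2l, pi4u, pi6l]
  rcases eq_or_lt_of_le h7 with h | h
  · rw [← h]; exact hP7
  · have := hanti (Set.mem_Icc.2 ⟨le_refl 7, by norm_num⟩) (Set.mem_Icc.2 ⟨h7, h47⟩) h
    linarith

lemma P47_48 {x : ℝ} (h47 : 47 ≤ x) (h48 : x ≤ 48) : Pf x < 0 := by
  unfold Pf
  nlinarith [pi2l, pi4u, pi6l,
    mul_nonneg (sub_nonneg.2 h48) (pow_pos (by linarith : (0:ℝ) < x) 4).le,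
    pow_le_pow_left₀ (by norm_num : (0:ℝ) ≤ 47) h47 4, sq_nonneg x,
    mul_le_mul_of_nonneg_left (sq_nonneg (x - 48)) (by linarith : (0:ℝ) ≤ x)]

lemma Pmono : StrictMonoOn Pf (Set.Ici 48) := by
  apply strictMonoOn_of_deriv_pos (convex_Ici _) hPcont.continuousOn
  intro y hy
  rw [interior_Ici] at hy
  rw [(hPderiv y).deriv]
  have hy' : (48:ℝ) < y := hy
  nlinarith [pi2u, pi4l, pow_pos (by linarith : (0:ℝ) < y) 3,
    mul_pos (pow_pos (by linarith : (0:ℝ) < y) 3) (by linarith : (0:ℝ) < 10*y - 480)]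

lemma P59 : Pf 59 < 0 := by unfold Pf; nlinarith [pi2l, pi4u, pi6l]
lemma P591 : Pf (591/10) > 0 := by unfold Pf; nlinarith [pi2u, pi4l, pi6u]

lemma key {x : ℝ} (hx : 7 ≤ x) :
    ((x / (x - 1)) * (1 - 4 * π ^ 2 / x ^ 2) ^ ((3 : ℝ) / 2) = 1 ↔ Pf x = 0) ∧
    ((x / (x - 1)) * (1 - 4 * π ^ 2 / x ^ 2) ^ ((3 : ℝ) / 2) > 1 ↔ Pf x > 0) := by
  have hx0 : (0:ℝ) < x := by linarith
  have hx1 : (0:ℝ) < x - 1 := by linarith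
  have h6 : (0:ℝ) < x ^ 6 := by positivity
  have ha : (0:ℝ) < 1 - 4 * π ^ 2 / x ^ 2 := by
    rw [sub_pos, div_lt_one (by positivity)]
    nlinarith [pi2u, hx]
  set a : ℝ := 1 - 4 * π ^ 2 / x ^ 2 with hadef
  set b : ℝ := (x - 1) / x with hbdef
  have hb : 0 < b := by positivity
  have hr : 0 < a ^ ((3:ℝ)/2) := rpow_pos_of_pos ha _
  have hsq : (a ^ ((3:ℝ)/2)) ^ 2 = a ^ 3 := by
    rw [← rpow_natCast (a ^ ((3:ℝ)/2)) 2, ← rpow_mul ha.le, ← rpow_natCast a 3]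
    norm_num
  have hkey : a ^ 3 - b ^ 2 = Pf x / x ^ 6 := by
    rw [hadef, hbdef]
    unfold Pf
    field_simp
    ring
  have hstep1 : (x / (x - 1)) * a ^ ((3:ℝ)/2) = 1 ↔ a ^ ((3:ℝ)/2) = b := by
    rw [div_mul_eq_mul_div, div_eq_one_iff_eq hx1.ne', hbdef, eq_div_iff hx0.ne']
    constructor <;> intro h <;> linarith [h, mul_comm x (a ^ ((3:ℝ)/2))]
  have hstep1' : (x / (x - 1)) * a ^ ((3:ℝ)/2) > 1 ↔ a ^ ((3:ℝ)/2) > b := by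
    rw [gt_iff_lt, div_mul_eq_mul_div, lt_div_iff₀ hx1, one_mul, hbdef, gt_iff_lt,
      div_lt_iff₀ hx0]
    constructor <;> intro h <;> nlinarith [h]
  have hstep2 : a ^ ((3:ℝ)/2) = b ↔ a ^ 3 = b ^ 2 := by
    rw [← sq_eq_sq₀ hr.le hb.le, hsq]
  have hstep2' : a ^ ((3:ℝ)/2) > b ↔ a ^ 3 > b ^ 2 := by
    rw [gt_iff_lt, ← pow_lt_pow_iff_left₀ hb.le hr.le (by norm_num : (2:ℕ) ≠ 0), hsq]
  constructor
  · rw [hstep1, hstep2]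
    constructor
    · intro h
      have h0 : Pf x / x ^ 6 = 0 := by rw [← hkey]; linarith
      rcases div_eq_zero_iff.mp h0 with h1 | h1
      · exact h1
      · exact absurd h1 h6.ne'
    · intro h
      have : a ^ 3 - b ^ 2 = 0 := by rw [hkey, h, zero_div]
      linarith
  · rw [hstep1', hstep2']
    constructor
    · intro h
      have h0 : 0 < Pf x / x ^ 6 := by rw [← hkey]; linarith
      rcases div_pos_iff.mp h0 with ⟨h1, _⟩ | ⟨_, h1⟩
      · exact h1
      · exact absurd h1 (by linarith)
    · intro h
      have : 0 < a ^ 3 - b ^ 2 := by rw [hkey]; exact div_pos h h6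
      linarith

theorem f_unique_root :
    ∃ x₀ : ℝ, x₀ ∈ Set.Ici (7 : ℝ) ∧
      (x₀ / (x₀ - 1)) * (1 - 4 * π ^ 2 / x₀ ^ 2) ^ ((3 : ℝ) / 2) = 1 ∧
      (∀ y : ℝ, y ∈ Set.Ici (7 : ℝ) →
        (y / (y - 1)) * (1 - 4 * π ^ 2 / y ^ 2) ^ ((3 : ℝ) / 2) = 1 → y = x₀) ∧
      59 < x₀ ∧ x₀ < 591 / 10 ∧
      (∀ x : ℝ, x > x₀ → (x / (x - 1)) * (1 - 4 * π ^ 2 / x ^ 2) ^ ((3 : ℝ) / 2) > 1) := by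
  have hsub : Set.Ioo (Pf 59) (Pf (591/10)) ⊆ Pf '' Set.Ioo 59 (591/10) :=
    intermediate_value_Ioo (by norm_num) hPcont.continuousOn
  obtain ⟨x₀, hx₀mem, hx₀⟩ := hsub ⟨P59, P591⟩
  obtain ⟨h59, h591⟩ := hx₀mem
  have hx₀7 : (7:ℝ) ≤ x₀ := by linarith
  have hx₀48 : x₀ ∈ Set.Ici (48:ℝ) := by simp only [Set.mem_Ici]; linarith
  refine ⟨x₀, hx₀7, (key hx₀7).1.mpr hx₀, ?_, h59, h591, ?_⟩
  · intro y hy hfy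
    have hy7 : (7:ℝ) ≤ y := hy
    have hyP : Pf y = 0 := (key hy7).1.mp hfy
    by_cases h48 : 48 ≤ y
    · exact Pmono.injOn h48 hx₀48 (hyP.trans hx₀.symm)
    · push_neg at h48
      by_cases h47 : y ≤ 47
      · exact absurd hyP (P7_47 hy7 h47).ne
      · push_neg at h47
        exact absurd hyP (P47_48 h47.le h48.le).ne
  · intro x hxgt
    have hx7 : (7:ℝ) ≤ x := by linarith
    apply (key hx7).2.mpr
    have := Pmono hx₀48 (by simp only [Set.mem_Ici]; linarith) hxgt
    rw [hx₀] at this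
    exact this
end

section
/- For all integers n and m with 5 ≤ n ≤ 10 and |m| ≥ 6, and for each q among 16m², 16m² + 16m + 4, 16m² + 8m + 1, and 16m² − 8m + 1, one has n·(1 − 4π²/(n² + q))^{3/2} > n − 1 (as real numbers). (These are the length-squared corrections to the Dehn-filling slopes producing all n–chain links with the corresponding numbers of half–twists; the inequality shows their volumes exceed (n−1)·v₈.) -/
open Real

lemma chain_helper (N D d : ℝ) (hN : 2 ≤ N) (hd : (39.4784264 : ℝ) ≤ d) (hD : d ≤ D)
    (hpi : 4 * π ^ 2 ≤ 39.4784264)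
    (h : (N - 1) ^ 2 * d ^ 3 < N ^ 2 * (d - 39.4784264) ^ 3) :
    N * (1 - 4 * π ^ 2 / D) ^ ((3 : ℝ) / 2) > N - 1 := by
  have hd0 : (0 : ℝ) < d := lt_of_lt_of_le (by norm_num) hd
  have hD0 : (0 : ℝ) < D := lt_of_lt_of_le hd0 hD
  have hpi0 : (0 : ℝ) ≤ 4 * π ^ 2 := by positivity
  set r : ℝ := (d - 39.4784264) / d with hr_def
  have hr0 : (0 : ℝ) ≤ r := div_nonneg (by linarith) (by linarith)
  have hdiv : 4 * π ^ 2 / D ≤ 39.4784264 / d := div_le_div₀ (by norm_num) hpi hd0 hD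
  have hrx : r ≤ 1 - 4 * π ^ 2 / D := by
    have hr' : r = 1 - 39.4784264 / d := by
      rw [hr_def, sub_div, div_self hd0.ne']
    rw [hr']; linarith
  have hcore : (N - 1) ^ 2 < N ^ 2 * r ^ 3 := by
    rw [hr_def, div_pow, ← mul_div_assoc, lt_div_iff₀ (by positivity)]
    nlinarith
  set a : ℝ := 1 - 4 * π ^ 2 / D with ha_def
  have ha : 0 ≤ a := le_trans hr0 hrx
  have hA : 0 ≤ a ^ ((3 : ℝ) / 2) := Real.rpow_nonneg ha _
  have hA2 : (a ^ ((3 : ℝ) / 2)) ^ (2 : ℕ) = a ^ (3 : ℕ) := by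
    rw [← Real.rpow_natCast (a ^ ((3 : ℝ) / 2)) 2, ← Real.rpow_mul ha,
      ← Real.rpow_natCast a 3]
    norm_num
  have hr3 : r ^ 3 ≤ a ^ 3 := pow_le_pow_left₀ hr0 hrx 3
  have key : (N - 1) ^ 2 < (N * a ^ ((3 : ℝ) / 2)) ^ 2 := by
    rw [mul_pow, hA2]
    calc (N - 1) ^ 2 < N ^ 2 * r ^ 3 := hcore
      _ ≤ N ^ 2 * a ^ 3 := by nlinarith
  have hNA : 0 ≤ N * a ^ ((3 : ℝ) / 2) := by positivity
  exact lt_of_pow_lt_pow_left₀ 2 hNA key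

theorem small_chain_link_twists (n m : ℤ) (hn : 5 ≤ n) (hn' : n ≤ 10) (hm : 6 ≤ |m|)
    (q : ℤ)
    (hq : q = 16 * m ^ 2 ∨ q = 16 * m ^ 2 + 16 * m + 4 ∨
      q = 16 * m ^ 2 + 8 * m + 1 ∨ q = 16 * m ^ 2 - 8 * m + 1) :
    (n : ℝ) * (1 - 4 * π ^ 2 / ((n : ℝ) ^ 2 + (q : ℝ))) ^ ((3 : ℝ) / 2) > (n : ℝ) - 1 := by
  have hq484 : (484 : ℤ) ≤ q := by
    rcases le_abs.mp hm with hm' | hm' <;>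
      rcases hq with h | h | h | h <;> nlinarith
  have hqR : (484 : ℝ) ≤ (q : ℝ) := by exact_mod_cast hq484
  have hpi2 : 4 * π ^ 2 ≤ 39.4784264 := by
    have h1 : π < 3.141593 := Real.pi_lt_d6
    have h2 : π ^ 2 < 3.141593 ^ 2 := by
      apply pow_lt_pow_left₀ h1 Real.pi_pos.le
      norm_num
    have h3 : (3.141593 : ℝ) ^ 2 ≤ 9.8696066 := by norm_num
    linarith
  interval_cases n <;> push_cast <;>
    [ exact chain_helper 5 _ 509 (by norm_num) (by norm_num) (by norm_num; linarith)
        hpi2 (by norm_num);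
      exact chain_helper 6 _ 520 (by norm_num) (by norm_num) (by norm_num; linarith)
        hpi2 (by norm_num);
      exact chain_helper 7 _ 533 (by norm_num) (by norm_num) (by norm_num; linarith)
        hpi2 (by norm_num);
      exact chain_helper 8 _ 548 (by norm_num) (by norm_num) (by norm_num; linarith)
        hpi2 (by norm_num);
      exact chain_helper 9 _ 565 (by norm_num) (by norm_num) (by norm_num; linarith)
        hpi2 (by norm_num);
      exact chain_helper 10 _ 584 (by norm_num) (by norm_num) (by norm_num; linarith)
        hpi2 (by norm_num)]
end

section
/- Let x > 1 be a real number satisfying x²·(1 − ((x−1)/x)^{2/3}) < 4π², and set R(x) = (1/2)·√(π²/(1 − ((x−1)/x)^{2/3}) − x²/4). Then for all real numbers c and m with x² + 16(m + c)² > 4π², the equation (x/(x−1))·(1 − 4π²/(x² + 16(m+c)²))^{3/2} = 1 holds if and only if m = −c + R(x) or m = −c − R(x). (Specializing c = 0, −1/2 depending on parity recovers the zeros ±R(n), −1/2 ± R(n), −1/4 ± R(n), 1/4 ± R(n) of the volume-bound function f(n,m) in the four cases of Theorem 5.3.) -/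
open Real

theorem zeros_of_volume_bound (x : ℝ) (hx : 1 < x)
    (hx2 : x ^ 2 * (1 - ((x - 1) / x) ^ ((2 : ℝ) / 3)) < 4 * π ^ 2)
    (R : ℝ)
    (hR : R = (1 / 2) * Real.sqrt (π ^ 2 / (1 - ((x - 1) / x) ^ ((2 : ℝ) / 3)) - x ^ 2 / 4))
    (c m : ℝ) (hℓ : x ^ 2 + 16 * (m + c) ^ 2 > 4 * π ^ 2) :
    (x / (x - 1)) * (1 - 4 * π ^ 2 / (x ^ 2 + 16 * (m + c) ^ 2)) ^ ((3 : ℝ) / 2) = 1 ↔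
      m = -c + R ∨ m = -c - R := by
  have hπ : 0 < π := Real.pi_pos
  have hx0 : 0 < x := lt_trans one_pos hx
  set b : ℝ := ((x - 1) / x) ^ ((2 : ℝ) / 3) with hb
  have hbase0 : 0 < (x - 1) / x := div_pos (by linarith) hx0
  have hbase1 : (x - 1) / x < 1 := (div_lt_one hx0).mpr (by linarith)
  have hb0 : 0 < b := Real.rpow_pos_of_pos hbase0 _
  have hb1 : b < 1 := Real.rpow_lt_one hbase0.le hbase1 (by norm_num)
  have hu : 0 < 1 - b := by linarith
  set L : ℝ := x ^ 2 + 16 * (m + c) ^ 2 with hLdef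
  have hL0 : 0 < L := lt_trans (by positivity) hℓ
  have hA0 : 0 < 1 - 4 * π ^ 2 / L := by
    have : 4 * π ^ 2 / L < 1 := (div_lt_one hL0).mpr hℓ
    linarith
  have hin : 0 < π ^ 2 / (1 - b) - x ^ 2 / 4 := by
    rw [sub_pos, div_lt_div_iff₀ (by norm_num) hu]
    nlinarith
  have hR0 : 0 ≤ R := by rw [hR]; positivity
  have hR2 : 16 * R ^ 2 = 4 * π ^ 2 / (1 - b) - x ^ 2 := by
    rw [hR, mul_pow, sq_sqrt hin.le]; ring
  have key : (x / (x - 1)) * (1 - 4 * π ^ 2 / L) ^ ((3:ℝ)/2) = 1 ↔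
      1 - 4 * π ^ 2 / L = b := by
    constructor
    · intro h
      have h2 : (1 - 4 * π ^ 2 / L) ^ ((3:ℝ)/2) = (x - 1) / x := by
        have := eq_inv_of_mul_eq_one_right h
        rw [this, inv_div]
      have h3 := congrArg (fun y : ℝ => y ^ ((2:ℝ)/3)) h2
      simp only [← Real.rpow_mul hA0.le] at h3
      norm_num at h3
      simpa using h3
    · intro h
      have h2 : (1 - 4 * π ^ 2 / L) ^ ((3:ℝ)/2) = (x - 1) / x := by
        rw [h, hb, ← Real.rpow_mul hbase0.le]
        norm_num
      rw [h2, div_mul_div_comm, mul_comm x (x - 1)]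
      exact div_self (ne_of_gt (by nlinarith))
  rw [key]
  have hsq : (1 - 4 * π ^ 2 / L = b) ↔ (m + c) ^ 2 = R ^ 2 := by
    constructor
    · intro h
      have h4 : 4 * π ^ 2 = (1 - b) * L := by
        field_simp at h
        linarith
      have h5 : (1 - b) * (16 * R ^ 2) = (1 - b) * (16 * (m + c) ^ 2) := by
        rw [hR2]
        field_simp
        nlinarith [h4]
      have := mul_left_cancel₀ (ne_of_gt hu) h5
      linarith
    · intro h
      have h5 : L = 4 * π ^ 2 / (1 - b) := by
        rw [hLdef]
        have : 16 * (m + c) ^ 2 = 16 * R ^ 2 := by linarith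
        rw [this, hR2]; ring
      rw [h5]
      field_simp
      ring
  rw [hsq, sq_eq_sq_iff_eq_or_eq_neg]
  constructor <;> rintro (h | h) <;> [left; right; left; right] <;> linarith
end

section
/- For every natural number n ≥ 5 and every integer m such that n ≥ 60 or |m| ≥ 8, one has n·(1 − 4π²/(n² + 16m²))^{3/2} > n − 1 (as real numbers). (This is the case of Theorem 5.3 in which n is even and the number of half–twists r = 2m is even: the volume of the corresponding n–chain link complement, which is at least n·v₈·(1 − 4π²/(n² + 16m²))^{3/2}, exceeds (n−1)·v₈, the volume of the (n−1)–fold cyclic cover over a component of the Whitehead link.) -/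
open Real

theorem vol_withtwist_even_even (n : ℕ) (hn : 5 ≤ n) (m : ℤ) (h : 60 ≤ n ∨ 8 ≤ |m|) :
    (n : ℝ) * (1 - 4 * π ^ 2 / ((n : ℝ) ^ 2 + 16 * (m : ℝ) ^ 2)) ^ ((3 : ℝ) / 2)
      > (n : ℝ) - 1 := by
  have hn5 : (5:ℝ) ≤ n := by exact_mod_cast hn
  have hpi : π ^ 2 < 10 := by nlinarith [pi_lt_d2, pi_gt_three]
  have hpi0 : 0 < π ^ 2 := by positivity
  have hm2 : (0:ℝ) ≤ (m:ℝ)^2 := sq_nonneg _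
  set D : ℝ := (n:ℝ)^2 + 16*(m:ℝ)^2 with hD
  have hkey : 6 * π ^ 2 * n < D := by
    rcases h with h | h
    · have : (60:ℝ) ≤ n := by exact_mod_cast h
      nlinarith
    · have h8 : (8:ℝ) ≤ |(m:ℝ)| := by
        rw [← Int.cast_abs]
        exact_mod_cast h
      have hm : (64:ℝ) ≤ (m:ℝ)^2 := by nlinarith [abs_nonneg (m:ℝ), sq_abs (m:ℝ)]
      nlinarith [sq_nonneg ((n:ℝ) - 30)]
  have hD0 : (0:ℝ) < D := by nlinarith
  set x : ℝ := 4 * π ^ 2 / D with hx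
  have hx0 : 0 < x := by positivity
  have hxn : (3/2) * x * n < 1 := by
    rw [hx, show (3/2:ℝ) * (4*π^2/D) * (n:ℝ) = (6*π^2*(n:ℝ))/D by ring, div_lt_one hD0]
    exact hkey
  have hx1 : x ≤ 1 := by
    rw [hx, div_le_one hD0]
    nlinarith
  have hb : 1 + (3/2) * (-x) ≤ (1 + (-x)) ^ ((3:ℝ)/2) :=
    one_add_mul_self_le_rpow_one_add (by linarith) (by norm_num)
  have hn0 : (0:ℝ) < n := by linarith
  have heq : (1:ℝ) + (-x) = 1 - x := by ring
  rw [heq] at hb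
  calc (n:ℝ) - 1 < n * (1 + (3/2) * (-x)) := by nlinarith
    _ ≤ n * (1 - x) ^ ((3:ℝ)/2) := mul_le_mul_of_nonneg_left hb hn0.le
end

section
/- For every natural number n ≥ 5 and every integer m such that n ≥ 60 or |m| ≥ 8, one has n·(1 − 4π²/(n² + 16m² + 8m + 1))^{3/2} > n − 1 (as real numbers). (This is the case of Theorem 5.3 in which n is odd and the number of half–twists r = 2m is even.) -/
open Real

theorem vol_withtwist_odd_even (n : ℕ) (hn : 5 ≤ n) (m : ℤ) (h : 60 ≤ n ∨ 8 ≤ |m|) :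
    (n : ℝ) * (1 - 4 * π ^ 2 / ((n : ℝ) ^ 2 + 16 * (m : ℝ) ^ 2 + 8 * (m : ℝ) + 1))
        ^ ((3 : ℝ) / 2) > (n : ℝ) - 1 := by
  set N : ℝ := (n : ℝ) with hN
  set M : ℝ := (m : ℝ) with hM
  set D : ℝ := N ^ 2 + 16 * M ^ 2 + 8 * M + 1 with hDdef
  have hn5 : (5 : ℝ) ≤ N := by rw [hN]; exact_mod_cast hn
  have hpi : π < 3.15 := pi_lt_d2
  have hpi0 : 0 < π := pi_pos
  have hpi2 : π ^ 2 < 9.9225 := by nlinarith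
  have hkey : 6 * π ^ 2 * N < D := by
    rcases h with hn60 | hm8
    · have h60 : (60 : ℝ) ≤ N := by rw [hN]; exact_mod_cast hn60
      nlinarith [sq_nonneg (4 * M + 1), mul_le_mul_of_nonneg_left h60 (by linarith : (0:ℝ) ≤ N)]
    · have hm : (8 : ℝ) ≤ |M| := by
        rw [hM, ← Int.cast_abs]
        exact_mod_cast hm8
      have h64 : (64 : ℝ) ≤ M ^ 2 := by nlinarith [sq_abs M]
      nlinarith [neg_abs_le M, sq_abs M, sq_nonneg (N - 30), sq_nonneg (|M| - 8), abs_nonneg M]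
  have hN0 : 0 < N := by linarith
  have hD0 : 0 < D := by nlinarith
  have hx : 4 * π ^ 2 / D ≤ 1 := by
    rw [div_le_one hD0]; nlinarith
  have hb : 1 + (3 / 2 : ℝ) * (-(4 * π ^ 2 / D)) ≤
      (1 + -(4 * π ^ 2 / D)) ^ ((3 : ℝ) / 2) :=
    one_add_mul_self_le_rpow_one_add (by linarith) (by norm_num)
  have h1 : 1 - 3 / 2 * (4 * π ^ 2 / D) ≤ (1 - 4 * π ^ 2 / D) ^ ((3 : ℝ) / 2) := by
    have e1 : (1 : ℝ) + -(4 * π ^ 2 / D) = 1 - 4 * π ^ 2 / D := by ring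
    have e2 : (1 : ℝ) + (3 / 2 : ℝ) * (-(4 * π ^ 2 / D)) = 1 - 3 / 2 * (4 * π ^ 2 / D) := by
      ring
    rw [e1, e2] at hb
    exact hb
  have hfin : N - 1 < N * (1 - 3 / 2 * (4 * π ^ 2 / D)) := by
    have hlt : N * (3 / 2 * (4 * π ^ 2 / D)) < 1 := by
      rw [show N * (3 / 2 * (4 * π ^ 2 / D)) = 6 * π ^ 2 * N / D by ring]
      rw [div_lt_one hD0]
      exact hkey
    nlinarith
  calc N - 1 < N * (1 - 3 / 2 * (4 * π ^ 2 / D)) := hfin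
    _ ≤ N * (1 - 4 * π ^ 2 / D) ^ ((3 : ℝ) / 2) :=
        mul_le_mul_of_nonneg_left h1 hN0.le
end

section
/- For every natural number n ≥ 5 and every integer m such that n ≥ 60 or |m| ≥ 8, one has n·(1 − 4π²/(n² + 16m² − 8m + 1))^{3/2} > n − 1 (as real numbers). (This is the case of Theorem 5.3 in which n is odd and the number of half–twists r = 2m + 1 is odd.) -/
open Real

theorem vol_withtwist_odd_odd (n : ℕ) (hn : 5 ≤ n) (m : ℤ) (h : 60 ≤ n ∨ 8 ≤ |m|) :
    (n : ℝ) * (1 - 4 * π ^ 2 / ((n : ℝ) ^ 2 + 16 * (m : ℝ) ^ 2 - 8 * (m : ℝ) + 1))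
        ^ ((3 : ℝ) / 2) > (n : ℝ) - 1 := by
  have hn5 : (5:ℝ) ≤ n := by exact_mod_cast hn
  have hπ2 : π ^ 2 < 9.87 := by
    nlinarith [Real.pi_lt_d6, Real.pi_pos]
  set L : ℝ := (n:ℝ) ^ 2 + 16 * (m : ℝ) ^ 2 - 8 * (m : ℝ) + 1 with hL
  have hkey : 6 * π ^ 2 * n < L := by
    rcases h with h | h
    · have h60 : (60:ℝ) ≤ n := by exact_mod_cast h
      nlinarith [sq_nonneg (4 * (m:ℝ) - 1), Real.pi_pos]
    · have h8 : (8:ℝ) ≤ |(m:ℝ)| := by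
        rw [← Int.cast_abs]; exact_mod_cast h
      have hm2 : (64:ℝ) ≤ (m:ℝ)^2 := by
        nlinarith [sq_abs (m:ℝ)]
      have hma : 8 * (m:ℝ) ≤ (m:ℝ)^2 := by
        nlinarith [le_abs_self (m:ℝ), sq_abs (m:ℝ)]
      nlinarith [sq_nonneg ((n:ℝ) - 30)]
  have hLpos : 0 < L := by nlinarith [sq_nonneg π]
  have hx1 : 4 * π ^ 2 / L ≤ 1 := by
    rw [div_le_one hLpos]
    nlinarith [Real.pi_pos]
  have hber : 1 + (3/2 : ℝ) * (-(4 * π ^ 2 / L)) ≤ (1 + (-(4 * π ^ 2 / L))) ^ ((3:ℝ)/2) := by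
    apply one_add_mul_self_le_rpow_one_add (by linarith) (by norm_num)
  have hber' : 1 - 6 * π ^ 2 / L ≤ (1 - 4 * π ^ 2 / L) ^ ((3:ℝ)/2) := by
    have e1 : (1 : ℝ) + -(4 * π ^ 2 / L) = 1 - 4 * π ^ 2 / L := by ring
    have e2 : (1 : ℝ) + (3/2 : ℝ) * (-(4 * π ^ 2 / L)) = 1 - 6 * π ^ 2 / L := by ring
    rw [e1, e2] at hber
    exact hber
  have hnpos : (0:ℝ) < n := by linarith
  have h1 : (n:ℝ) * (1 - 6 * π ^ 2 / L) ≤ (n:ℝ) * (1 - 4 * π ^ 2 / L) ^ ((3:ℝ)/2) :=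
    mul_le_mul_of_nonneg_left hber' (le_of_lt hnpos)
  have h2 : (n:ℝ) - 1 < (n:ℝ) * (1 - 6 * π ^ 2 / L) := by
    have : (n:ℝ) * (6 * π ^ 2 / L) < 1 := by
      rw [mul_div_assoc'] at *
      rw [div_lt_one hLpos]
      linarith [hkey]
    nlinarith
  linarith
end
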